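/- For n ≥ 1 and 1 ≤ i ≤ m ≤ n, define ψ_{m,i}(z) : Matₙ(ℂ)×ℂⁿ → Matₙ(ℂ)×ℂⁿ by ψ_{m,i}(z)(B,b) = (exp(zN)·B·exp(−zN), exp(zN)·b), where N = ι_m((B_{(m)})^{i−1}). Then for all indices 1 ≤ i ≤ m ≤ n, 1 ≤ i′ ≤ m′ ≤ n and all z, w ∈ ℂ, ψ_{m,i}(z) ∘ ψ_{m′,i′}(w) = ψ_{m′,i′}(w) ∘ ψ_{m,i}(z); moreover each ψ_{m,i}(z) maps V_n bijectively onto V_n. Consequently composing these flows defines an action of the abelian group ℂ^{n(n+1)/2} on Matₙ(ℂ)×ℂⁿ which preserves V_n (the Gelfand–Zeitlin action on V_n). -/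

import Mathlib

open Matrix

noncomputable section

/-- Upper-left `m × m` submatrix of an `n × n` matrix. -/
def ulMinor {n : ℕ} (m : ℕ) (hm : m ≤ n) (B : Matrix (Fin n) (Fin n) ℂ) :
    Matrix (Fin m) (Fin m) ℂ :=
  fun i j => B (Fin.castLE hm i) (Fin.castLE hm j)

/-- The embedding `ι_m` of `m × m` matrices into `n × n` matrices, placing the matrix in
the upper-left block and zeros elsewhere. -/
def iotaEmb {m : ℕ} (n : ℕ) (X : Matrix (Fin m) (Fin m) ℂ) : Matrix (Fin n) (Fin n) ℂ :=
  fun i j => if hi : (i : ℕ) < m then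
    (if hj : (j : ℕ) < m then X ⟨i, hi⟩ ⟨j, hj⟩ else 0) else 0

/-- The Gelfand–Zeitlin flow `φ_{m,i}(z)(B) = exp(z ι_m((B_(m))^(i-1))) B exp(-z ι_m((B_(m))^(i-1)))`. -/
def gzFlow {n : ℕ} (m i : ℕ) (hm : m ≤ n) (z : ℂ) (B : Matrix (Fin n) (Fin n) ℂ) :
    Matrix (Fin n) (Fin n) ℂ :=
  NormedSpace.exp (z • iotaEmb n ((ulMinor m hm B) ^ (i - 1))) * B *
    NormedSpace.exp ((-z) • iotaEmb n ((ulMinor m hm B) ^ (i - 1)))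


/-- The Krylov matrix of `(B, b)`, whose columns are `b, Bb, …, B^{n−1}b`. -/
def krylov {n : ℕ} (B : Matrix (Fin n) (Fin n) ℂ) (b : Fin n → ℂ) :
    Matrix (Fin n) (Fin n) ℂ :=
  fun i j => (B ^ (j : ℕ) *ᵥ b) i

/-- `b` is a cyclic vector for `B` if `b, Bb, …, B^{n−1}b` form a basis of `ℂⁿ`. -/
def IsCyclic' {n : ℕ} (B : Matrix (Fin n) (Fin n) ℂ) (b : Fin n → ℂ) : Prop :=
  IsUnit (krylov B b)

/-- `V_n`, the set of pairs `(B, b)` with `b` cyclic for `B`. -/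
def Vn (n : ℕ) : Set (Matrix (Fin n) (Fin n) ℂ × (Fin n → ℂ)) :=
  {p | IsCyclic' p.1 p.2}

/-- The Gelfand–Zeitlin flow `ψ_{m,i}(z)` on `Matₙ(ℂ) × ℂⁿ`. -/
def gzFlowV {n : ℕ} (m i : ℕ) (hm : m ≤ n) (z : ℂ)
    (p : Matrix (Fin n) (Fin n) ℂ × (Fin n → ℂ)) :
    Matrix (Fin n) (Fin n) ℂ × (Fin n → ℂ) :=
  (NormedSpace.exp (z • iotaEmb n ((ulMinor m hm p.1) ^ (i - 1))) * p.1 *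
      NormedSpace.exp ((-z) • iotaEmb n ((ulMinor m hm p.1) ^ (i - 1))),
   NormedSpace.exp (z • iotaEmb n ((ulMinor m hm p.1) ^ (i - 1))) *ᵥ p.2)

open scoped Nat

namespace GZ

lemma sum_dite_lt {m N : ℕ} (hm : m ≤ N) (g : Fin m → ℂ) :
    ∑ k : Fin N, (if h : (k : ℕ) < m then g ⟨k, h⟩ else 0) = ∑ k : Fin m, g k := by
  classical
  have h1 : ∑ k : Fin N, (if h : (k : ℕ) < m then g ⟨k, h⟩ else 0)
      = ∑ k ∈ Finset.univ.map (Fin.castLEEmb hm),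
          (if h : (k : ℕ) < m then g ⟨k, h⟩ else 0) := by
    refine (Finset.sum_subset (Finset.subset_univ _) ?_).symm
    intro k _ hk
    rw [dif_neg]
    intro hlt
    exact hk (Finset.mem_map.2 ⟨⟨k, hlt⟩, Finset.mem_univ _, by ext; simp⟩)
  rw [h1, Finset.sum_map]
  refine Finset.sum_congr rfl fun k _ => ?_
  rw [dif_pos (show ((Fin.castLEEmb hm k : Fin N) : ℕ) < m from k.isLt)]
  rfl

variable {n m m' : ℕ}

lemma iota_add (X Y : Matrix (Fin m) (Fin m) ℂ) :
    iotaEmb n (X + Y) = iotaEmb n X + iotaEmb n Y := by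
  ext i j; simp only [iotaEmb, Matrix.add_apply]; split_ifs <;> simp

lemma iota_sub (X Y : Matrix (Fin m) (Fin m) ℂ) :
    iotaEmb n (X - Y) = iotaEmb n X - iotaEmb n Y := by
  ext i j; simp only [iotaEmb, Matrix.sub_apply]; split_ifs <;> simp

lemma iota_neg (X : Matrix (Fin m) (Fin m) ℂ) :
    iotaEmb n (-X) = -iotaEmb n X := by
  ext i j; simp only [iotaEmb, Matrix.neg_apply]; split_ifs <;> simp

lemma iota_smul (z : ℂ) (X : Matrix (Fin m) (Fin m) ℂ) :
    iotaEmb n (z • X) = z • iotaEmb n X := by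
  ext i j; simp only [iotaEmb, Matrix.smul_apply]; split_ifs <;> simp

lemma iota_mul (hm : m ≤ n) (X Y : Matrix (Fin m) (Fin m) ℂ) :
    iotaEmb n X * iotaEmb n Y = iotaEmb n (X * Y) := by
  ext i j
  by_cases hi : (i : ℕ) < m
  · by_cases hj : (j : ℕ) < m
    · simp only [Matrix.mul_apply, iotaEmb, dif_pos hi, dif_pos hj]
      rw [← sum_dite_lt hm (fun k => X ⟨i, hi⟩ k * Y k ⟨j, hj⟩)]
      refine Finset.sum_congr rfl fun k _ => ?_
      by_cases hk : (k : ℕ) < m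
      · simp [dif_pos hk]
      · simp [dif_neg hk]
    · simp only [Matrix.mul_apply, iotaEmb, dif_pos hi, dif_neg hj]
      refine Finset.sum_eq_zero fun k _ => ?_
      split_ifs <;> simp
  · simp only [Matrix.mul_apply, iotaEmb, dif_neg hi]
    exact Finset.sum_eq_zero fun k _ => zero_mul _

lemma iota_trans (hmm' : m ≤ m') (X : Matrix (Fin m) (Fin m) ℂ) :
    iotaEmb n (iotaEmb m' X) = iotaEmb n X := by
  ext i j
  simp only [iotaEmb]
  split_ifs <;> first | rfl | omega

lemma ulMinor_add (hm : m ≤ n) (A B : Matrix (Fin n) (Fin n) ℂ) :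
    ulMinor m hm (A + B) = ulMinor m hm A + ulMinor m hm B := rfl

lemma ulMinor_sub (hm : m ≤ n) (A B : Matrix (Fin n) (Fin n) ℂ) :
    ulMinor m hm (A - B) = ulMinor m hm A - ulMinor m hm B := rfl

lemma ulMinor_one (hm : m ≤ n) : ulMinor m hm (1 : Matrix (Fin n) (Fin n) ℂ) = 1 := by
  ext i j
  simp only [ulMinor, Matrix.one_apply]
  by_cases h : i = j
  · simp [h]
  · rw [if_neg h, if_neg (fun hc => h (Fin.castLE_injective hm hc))]

lemma ulMinor_trans (hmm' : m ≤ m') (hm' : m' ≤ n) (B : Matrix (Fin n) (Fin n) ℂ) :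
    ulMinor m (hmm'.trans hm') B = ulMinor m hmm' (ulMinor m' hm' B) := by
  ext i j
  simp only [ulMinor, Fin.castLE_castLE]

lemma ulMinor_iota_mul (hm : m ≤ n) (P : Matrix (Fin m) (Fin m) ℂ)
    (B : Matrix (Fin n) (Fin n) ℂ) :
    ulMinor m hm (iotaEmb n P * B) = P * ulMinor m hm B := by
  ext i j
  simp only [ulMinor, Matrix.mul_apply, iotaEmb]
  rw [← sum_dite_lt hm (fun k => P i k * B (Fin.castLE hm k) (Fin.castLE hm j))]
  refine Finset.sum_congr rfl fun k _ => ?_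
  by_cases hk : (k : ℕ) < m
  · rw [dif_pos hk, dif_pos (show ((Fin.castLE hm i : Fin n) : ℕ) < m from i.isLt), dif_pos hk]
    rfl
  · rw [dif_neg hk, dif_pos (show ((Fin.castLE hm i : Fin n) : ℕ) < m from i.isLt), dif_neg hk,
      zero_mul]

lemma ulMinor_mul_iota (hm : m ≤ n) (Q : Matrix (Fin m) (Fin m) ℂ)
    (B : Matrix (Fin n) (Fin n) ℂ) :
    ulMinor m hm (B * iotaEmb n Q) = ulMinor m hm B * Q := by
  ext i j
  simp only [ulMinor, Matrix.mul_apply, iotaEmb]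
  rw [← sum_dite_lt hm (fun k => B (Fin.castLE hm i) (Fin.castLE hm k) * Q k j)]
  refine Finset.sum_congr rfl fun k _ => ?_
  by_cases hk : (k : ℕ) < m
  · rw [dif_pos hk, dif_pos (show ((Fin.castLE hm j : Fin n) : ℕ) < m from j.isLt), dif_pos hk]
    rfl
  · rw [dif_neg hk, dif_neg hk, mul_zero]


lemma iota_mul_E (hm : m ≤ n) (X : Matrix (Fin m) (Fin m) ℂ) :
    iotaEmb n X * (1 - iotaEmb n (1 : Matrix (Fin m) (Fin m) ℂ)) = 0 := by
  rw [mul_sub, mul_one, iota_mul hm, mul_one, sub_self]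

lemma E_mul_iota (hm : m ≤ n) (X : Matrix (Fin m) (Fin m) ℂ) :
    (1 - iotaEmb n (1 : Matrix (Fin m) (Fin m) ℂ)) * iotaEmb n X = 0 := by
  rw [sub_mul, one_mul, iota_mul hm, one_mul, sub_self]

lemma ulMinor_mul_E (hm : m ≤ n) (B : Matrix (Fin n) (Fin n) ℂ) :
    ulMinor m hm (B * (1 - iotaEmb n (1 : Matrix (Fin m) (Fin m) ℂ))) = 0 := by
  rw [mul_sub, mul_one, ulMinor_sub, ulMinor_mul_iota hm, mul_one, sub_self]

lemma ulMinor_E_mul (hm : m ≤ n) (B : Matrix (Fin n) (Fin n) ℂ) :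
    ulMinor m hm ((1 - iotaEmb n (1 : Matrix (Fin m) (Fin m) ℂ)) * B) = 0 := by
  rw [sub_mul, one_mul, ulMinor_sub, ulMinor_iota_mul hm, one_mul, sub_self]

lemma ulMinor_sandwich (hm : m ≤ n) (P Q : Matrix (Fin m) (Fin m) ℂ)
    (B : Matrix (Fin n) (Fin n) ℂ) :
    ulMinor m hm ((iotaEmb n P + (1 - iotaEmb n (1 : Matrix (Fin m) (Fin m) ℂ))) * B *
        (iotaEmb n Q + (1 - iotaEmb n (1 : Matrix (Fin m) (Fin m) ℂ))))
      = P * ulMinor m hm B * Q := by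
  have h : (iotaEmb n P + (1 - iotaEmb n (1 : Matrix (Fin m) (Fin m) ℂ))) * B *
        (iotaEmb n Q + (1 - iotaEmb n (1 : Matrix (Fin m) (Fin m) ℂ)))
      = iotaEmb n P * (B * iotaEmb n Q) + iotaEmb n P *
          (B * (1 - iotaEmb n (1 : Matrix (Fin m) (Fin m) ℂ)))
          + ((1 - iotaEmb n (1 : Matrix (Fin m) (Fin m) ℂ)) * (B * iotaEmb n Q)
          + (1 - iotaEmb n (1 : Matrix (Fin m) (Fin m) ℂ)) *
              (B * (1 - iotaEmb n (1 : Matrix (Fin m) (Fin m) ℂ)))) := by noncomm_ring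
  rw [h, ulMinor_add, ulMinor_add, ulMinor_add, ulMinor_iota_mul hm, ulMinor_iota_mul hm,
    ulMinor_E_mul hm, ulMinor_E_mul hm, ulMinor_mul_iota hm, ulMinor_mul_E hm, mul_zero,
    add_zero, add_zero, add_zero, mul_assoc]

lemma iota_sandwich (hm : m ≤ n) (P Q Z : Matrix (Fin m) (Fin m) ℂ) :
    (iotaEmb n P + (1 - iotaEmb n (1 : Matrix (Fin m) (Fin m) ℂ))) * iotaEmb n Z *
        (iotaEmb n Q + (1 - iotaEmb n (1 : Matrix (Fin m) (Fin m) ℂ)))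
      = iotaEmb n (P * Z * Q) := by
  rw [add_mul, E_mul_iota hm, add_zero, iota_mul hm, mul_add, iota_mul hm, iota_mul_E hm,
    add_zero]

lemma exp_clm_mul {A B : Type*} [NormedRing A] [NormedRing B] [NormedAlgebra ℂ A]
    [NormedAlgebra ℂ B] [CompleteSpace A] [CompleteSpace B]
    (f : A →L[ℂ] B) (hf : ∀ x y : A, f (x * y) = f x * f y) (x : A) :
    NormedSpace.exp (f x) = f (NormedSpace.exp x) + (1 - f 1) := by
  have hpow : ∀ k : ℕ, (f x) ^ (k + 1) = f (x ^ (k + 1)) := by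
    intro k
    induction k with
    | zero => simp
    | succ k ih => rw [pow_succ, ih, ← hf, ← pow_succ]
  have h1 : Summable (fun k : ℕ => ((k ! : ℂ))⁻¹ • x ^ k) := NormedSpace.expSeries_summable' x
  have h2 : Summable (fun k : ℕ => ((k ! : ℂ))⁻¹ • (f x) ^ k) :=
    NormedSpace.expSeries_summable' (f x)
  have h3 : Summable (fun k : ℕ => f (((k ! : ℂ))⁻¹ • x ^ k)) :=
    (h1.map f.toLinearMap.toAddMonoidHom f.continuous :)
  simp only [NormedSpace.exp_eq_tsum ℂ]
  rw [f.map_tsum h1, h2.tsum_eq_zero_add, h3.tsum_eq_zero_add]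
  have hc : ∀ k : ℕ, (((k + 1)! : ℂ))⁻¹ • (f x) ^ (k + 1)
      = f ((((k + 1)! : ℂ))⁻¹ • x ^ (k + 1)) := by
    intro k
    rw [hpow, _root_.map_smul]
  rw [tsum_congr hc]
  simp only [pow_zero, Nat.factorial_zero, Nat.cast_one, inv_one, one_smul, _root_.map_smul, _root_.map_one]
  abel

def iotaLM (m n : ℕ) : Matrix (Fin m) (Fin m) ℂ →ₗ[ℂ] Matrix (Fin n) (Fin n) ℂ where
  toFun := iotaEmb n
  map_add' := iota_add
  map_smul' := fun z X => iota_smul z X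

lemma exp_iota (hm : m ≤ n) (Y : Matrix (Fin m) (Fin m) ℂ) :
    NormedSpace.exp (iotaEmb n Y)
      = iotaEmb n (NormedSpace.exp Y) + (1 - iotaEmb n (1 : Matrix (Fin m) (Fin m) ℂ)) := by
  letI : NormedRing (Matrix (Fin m) (Fin m) ℂ) := Matrix.linftyOpNormedRing
  letI : NormedAlgebra ℂ (Matrix (Fin m) (Fin m) ℂ) := Matrix.linftyOpNormedAlgebra
  letI : NormedRing (Matrix (Fin n) (Fin n) ℂ) := Matrix.linftyOpNormedRing
  letI : NormedAlgebra ℂ (Matrix (Fin n) (Fin n) ℂ) := Matrix.linftyOpNormedAlgebra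
  exact exp_clm_mul ⟨iotaLM m n, LinearMap.continuous_of_finiteDimensional _⟩
    (fun X Y => (iota_mul hm X Y).symm) Y

lemma exp_iota_decomp (hmm' : m ≤ m') (hm' : m' ≤ n) (X : Matrix (Fin m) (Fin m) ℂ) :
    NormedSpace.exp (iotaEmb n X)
      = iotaEmb n (NormedSpace.exp (iotaEmb m' X))
          + (1 - iotaEmb n (1 : Matrix (Fin m') (Fin m') ℂ)) := by
  rw [exp_iota (hmm'.trans hm'), exp_iota hmm', iota_add, iota_sub, iota_trans hmm',
    iota_trans hmm']
  abel

lemma exp_mul_exp_neg {k : ℕ} (A : Matrix (Fin k) (Fin k) ℂ) :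
    NormedSpace.exp A * NormedSpace.exp (-A) = 1 := by
  rw [← Matrix.exp_add_of_commute A (-A) (Commute.neg_right (Commute.refl A)),
    add_neg_cancel, NormedSpace.exp_zero]

def expU {k : ℕ} (A : Matrix (Fin k) (Fin k) ℂ) : (Matrix (Fin k) (Fin k) ℂ)ˣ where
  val := NormedSpace.exp A
  inv := NormedSpace.exp (-A)
  val_inv := exp_mul_exp_neg A
  inv_val := by simpa using exp_mul_exp_neg (-A)


lemma iota_self (Z : Matrix (Fin m) (Fin m) ℂ) : iotaEmb m Z = Z := by
  ext i j
  simp only [iotaEmb, dif_pos i.isLt, dif_pos j.isLt]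

lemma neg_smul_iota (z : ℂ) (A : Matrix (Fin m) (Fin m) ℂ) :
    (-z) • iotaEmb n A = iotaEmb n (-(z • A)) := by
  rw [iota_neg, iota_smul, neg_smul]

lemma gzFlowV_eq (m i : ℕ) (hm : m ≤ n) (z : ℂ)
    (p : Matrix (Fin n) (Fin n) ℂ × (Fin n → ℂ)) :
    gzFlowV m i hm z p
      = (NormedSpace.exp (iotaEmb n (z • (ulMinor m hm p.1) ^ (i - 1))) * p.1 *
           NormedSpace.exp (iotaEmb n (-(z • (ulMinor m hm p.1) ^ (i - 1)))),
         NormedSpace.exp (iotaEmb n (z • (ulMinor m hm p.1) ^ (i - 1))) *ᵥ p.2) := by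
  simp only [gzFlowV]
  rw [neg_smul_iota z _, ← iota_smul z _]

lemma ulMinor_exp_conj (hmm' : m ≤ m') (hm' : m' ≤ n) (X : Matrix (Fin m) (Fin m) ℂ)
    (B : Matrix (Fin n) (Fin n) ℂ) :
    ulMinor m' hm' (NormedSpace.exp (iotaEmb n X) * B * NormedSpace.exp (iotaEmb n (-X)))
      = NormedSpace.exp (iotaEmb m' X) * ulMinor m' hm' B *
          NormedSpace.exp (iotaEmb m' (-X)) := by
  rw [exp_iota_decomp hmm' hm' X, exp_iota_decomp hmm' hm' (-X), ulMinor_sandwich hm']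

lemma iota_exp_conj (hmm' : m ≤ m') (hm' : m' ≤ n) (X : Matrix (Fin m) (Fin m) ℂ)
    (Z : Matrix (Fin m') (Fin m') ℂ) :
    NormedSpace.exp (iotaEmb n X) * iotaEmb n Z * NormedSpace.exp (iotaEmb n (-X))
      = iotaEmb n (NormedSpace.exp (iotaEmb m' X) * Z *
          NormedSpace.exp (iotaEmb m' (-X))) := by
  rw [exp_iota_decomp hmm' hm' X, exp_iota_decomp hmm' hm' (-X), iota_sandwich hm']

lemma ulMinor_exp_conj_self (hm' : m' ≤ n) (B : Matrix (Fin n) (Fin n) ℂ)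
    (Y : Matrix (Fin m') (Fin m') ℂ) (hY : Commute (ulMinor m' hm' B) Y) :
    ulMinor m' hm' (NormedSpace.exp (iotaEmb n Y) * B * NormedSpace.exp (iotaEmb n (-Y)))
      = ulMinor m' hm' B := by
  have h := ulMinor_exp_conj (le_refl m') hm' Y B
  rw [iota_self, iota_self] at h
  have hc : Commute (ulMinor m' hm' B) (NormedSpace.exp Y) := hY.exp_right
  rw [h, ← hc.eq, mul_assoc, exp_mul_exp_neg, mul_one]

lemma commute_pow_smul {k : ℕ} (C : Matrix (Fin k) (Fin k) ℂ) (w : ℂ) (j : ℕ) :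
    Commute C (w • C ^ j) :=
  ((Commute.refl C).pow_right j).smul_right w

lemma conj_pow_exp {k : ℕ} (A C : Matrix (Fin k) (Fin k) ℂ) (j : ℕ) :
    (NormedSpace.exp A * C * NormedSpace.exp (-A)) ^ j
      = NormedSpace.exp A * C ^ j * NormedSpace.exp (-A) :=
  (expU A).conj_pow C j


lemma exp_neg_mul_exp {k : ℕ} (A : Matrix (Fin k) (Fin k) ℂ) :
    NormedSpace.exp (-A) * NormedSpace.exp A = 1 := by
  simpa using exp_mul_exp_neg (-A)

lemma exp_conj_exp {k : ℕ} (A Z : Matrix (Fin k) (Fin k) ℂ) :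
    NormedSpace.exp (NormedSpace.exp A * Z * NormedSpace.exp (-A))
      = NormedSpace.exp A * NormedSpace.exp Z * NormedSpace.exp (-A) :=
  Matrix.exp_units_conj (expU A) Z

lemma gz_comm_le (m i m' i' : ℕ) (hmm' : m ≤ m') (hm : m ≤ n) (hm' : m' ≤ n) (z w : ℂ)
    (p : Matrix (Fin n) (Fin n) ℂ × (Fin n → ℂ)) :
    gzFlowV m i hm z (gzFlowV m' i' hm' w p) = gzFlowV m' i' hm' w (gzFlowV m i hm z p) := by
  obtain ⟨B, b⟩ := p
  simp only [gzFlowV_eq]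
  set C : Matrix (Fin m') (Fin m') ℂ := ulMinor m' hm' B with hC
  set Cm : Matrix (Fin m) (Fin m) ℂ := ulMinor m hm B with hCm
  set X : Matrix (Fin m) (Fin m) ℂ := z • Cm ^ (i - 1) with hX
  set Yv : Matrix (Fin m') (Fin m') ℂ := w • C ^ (i' - 1) with hYv
  set G := NormedSpace.exp (iotaEmb n X) with hG
  set G' := NormedSpace.exp (iotaEmb n (-X)) with hG'
  set H := NormedSpace.exp (iotaEmb n Yv) with hH
  set H' := NormedSpace.exp (iotaEmb n (-Yv)) with hH'
  set P := NormedSpace.exp (iotaEmb m' X) with hP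
  set P' := NormedSpace.exp (iotaEmb m' (-X)) with hP'
  have R1 : ulMinor m hm (H * B * H') = Cm := by
    have h2 : ulMinor m' hm' (H * B * H') = C :=
      ulMinor_exp_conj_self hm' B Yv (commute_pow_smul C w _)
    calc ulMinor m hm (H * B * H')
        = ulMinor m hmm' (ulMinor m' hm' (H * B * H')) := ulMinor_trans hmm' hm' _
      _ = ulMinor m hmm' C := by rw [h2]
      _ = Cm := (ulMinor_trans hmm' hm' B).symm
  have R2 : ulMinor m' hm' (G * B * G') = P * C * P' := ulMinor_exp_conj hmm' hm' X B
  have R3 : (P * C * P') ^ (i' - 1) = P * C ^ (i' - 1) * P' := by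
    rw [hP, hP', iota_neg]
    exact conj_pow_exp _ _ _
  have R4 : w • (P * C ^ (i' - 1) * P') = P * Yv * P' := by
    rw [← smul_mul_assoc, ← mul_smul_comm, hYv]
  have R5 : -(P * Yv * P') = P * -Yv * P' := by
    rw [← neg_mul, ← mul_neg]
  have R6 : G * iotaEmb n Yv * G' = iotaEmb n (P * Yv * P') := iota_exp_conj hmm' hm' X Yv
  have R7 : G * iotaEmb n (-Yv) * G' = iotaEmb n (P * -Yv * P') := iota_exp_conj hmm' hm' X (-Yv)
  rw [R1, R2, R3, R4, R5, ← R6, ← R7]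
  rw [hG', iota_neg] at R6 R7 ⊢
  rw [hG] at R6 R7 ⊢
  rw [exp_conj_exp, exp_conj_exp]
  have hG'G : NormedSpace.exp (-iotaEmb n X) * NormedSpace.exp (iotaEmb n X) = 1 :=
    exp_neg_mul_exp _
  set g := NormedSpace.exp (iotaEmb n X)
  set g' := NormedSpace.exp (-iotaEmb n X)
  have hmul2 : ∀ U V : Matrix (Fin n) (Fin n) ℂ,
      (g * U * g') * (g * V * g') = g * (U * V) * g' := by
    intro U V
    calc (g * U * g') * (g * V * g') = g * U * ((g' * g) * (V * g')) := by noncomm_ring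
      _ = g * U * (V * g') := by rw [hG'G, one_mul]
      _ = g * (U * V) * g' := by noncomm_ring
  simp only [Prod.mk.injEq]
  refine ⟨?_, ?_⟩
  · rw [hmul2, hmul2, hH, hH']
  · rw [hH, Matrix.mulVec_mulVec, Matrix.mulVec_mulVec]
    rw [mul_assoc, hG'G, mul_one]


lemma gz_inv (m i : ℕ) (hm : m ≤ n) (z : ℂ) (p : Matrix (Fin n) (Fin n) ℂ × (Fin n → ℂ)) :
    gzFlowV m i hm (-z) (gzFlowV m i hm z p) = p := by
  obtain ⟨B, b⟩ := p
  simp only [gzFlowV_eq]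
  set Cm : Matrix (Fin m) (Fin m) ℂ := ulMinor m hm B with hCm
  set X : Matrix (Fin m) (Fin m) ℂ := z • Cm ^ (i - 1) with hX
  have R1 : ulMinor m hm (NormedSpace.exp (iotaEmb n X) * B *
      NormedSpace.exp (iotaEmb n (-X))) = Cm :=
    ulMinor_exp_conj_self hm B X (commute_pow_smul Cm z _)
  rw [R1]
  have hnz : (-z) • Cm ^ (i - 1) = -X := by rw [hX, neg_smul]
  rw [hnz, neg_neg, iota_neg]
  have h1 : NormedSpace.exp (-iotaEmb n X) * NormedSpace.exp (iotaEmb n X) = 1 :=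
    exp_neg_mul_exp _
  simp only [Prod.mk.injEq]
  constructor
  · set g := NormedSpace.exp (iotaEmb n X)
    set g' := NormedSpace.exp (-iotaEmb n X)
    calc g' * (g * B * g') * g = (g' * g) * B * (g' * g) := by noncomm_ring
      _ = B := by rw [h1, one_mul, mul_one]
  · rw [Matrix.mulVec_mulVec, h1, Matrix.one_mulVec]

lemma krylov_conj (g g' : Matrix (Fin n) (Fin n) ℂ) (hgg : g' * g = 1)
    (B : Matrix (Fin n) (Fin n) ℂ) (b : Fin n → ℂ) :
    krylov (g * B * g') (g *ᵥ b) = g * krylov B b := by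
  have hp : ∀ j : ℕ, (g * B * g') ^ j * g = g * B ^ j := by
    intro j
    induction j with
    | zero => simp
    | succ j ih =>
        calc (g * B * g') ^ (j + 1) * g = (g * B * g') * ((g * B * g') ^ j * g) := by
              rw [pow_succ', mul_assoc]
          _ = (g * B * g') * (g * B ^ j) := by rw [ih]
          _ = g * (B * ((g' * g) * B ^ j)) := by noncomm_ring
          _ = g * B ^ (j + 1) := by rw [hgg, one_mul, ← pow_succ']
  ext i j
  show ((g * B * g') ^ (j : ℕ) *ᵥ (g *ᵥ b)) i = (g * krylov B b) i j
  rw [Matrix.mulVec_mulVec, hp, ← Matrix.mulVec_mulVec]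
  simp [krylov, Matrix.mul_apply, Matrix.mulVec, dotProduct]

lemma gz_mapsTo (m i : ℕ) (hm : m ≤ n) (z : ℂ) :
    Set.MapsTo (gzFlowV m i hm z) (Vn n) (Vn n) := by
  intro p hp
  obtain ⟨B, b⟩ := p
  have hk : IsUnit (krylov B b) := hp
  simp only [Vn, IsCyclic', Set.mem_setOf_eq, gzFlowV_eq]
  set X : Matrix (Fin m) (Fin m) ℂ := z • (ulMinor m hm B) ^ (i - 1) with hX
  have hgg : NormedSpace.exp (iotaEmb n (-X)) * NormedSpace.exp (iotaEmb n X) = 1 := by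
    rw [iota_neg]
    exact exp_neg_mul_exp _
  rw [krylov_conj _ _ hgg B b]
  have hu : IsUnit (NormedSpace.exp (iotaEmb n X)) := ⟨expU (iotaEmb n X), rfl⟩
  exact hu.mul hk

lemma gz_bijOn (m i : ℕ) (hm : m ≤ n) (z : ℂ) :
    Set.BijOn (gzFlowV m i hm z) (Vn n) (Vn n) := by
  have hinv : Set.InvOn (gzFlowV m i hm (-z)) (gzFlowV m i hm z) (Vn n) (Vn n) :=
    ⟨fun p _ => gz_inv m i hm z p, fun p _ => by simpa using gz_inv m i hm (-z) p⟩
  exact hinv.bijOn (gz_mapsTo m i hm z) (gz_mapsTo m i hm (-z))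

end GZ

/-- The Gelfand–Zeitlin flows `ψ_{m,i}` on `Matₙ(ℂ) × ℂⁿ` pairwise commute and each of
them maps `V_n` bijectively onto `V_n`. -/
theorem gz_flows_on_Vn (n : ℕ) (hn : 1 ≤ n) :
    (∀ (m i m' i' : ℕ), 1 ≤ i → i ≤ m → ∀ hm : m ≤ n, 1 ≤ i' → i' ≤ m' → ∀ hm' : m' ≤ n,
      ∀ (z w : ℂ) (p : Matrix (Fin n) (Fin n) ℂ × (Fin n → ℂ)),
        gzFlowV m i hm z (gzFlowV m' i' hm' w p) =
          gzFlowV m' i' hm' w (gzFlowV m i hm z p)) ∧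
    (∀ (m i : ℕ), 1 ≤ i → i ≤ m → ∀ hm : m ≤ n, ∀ z : ℂ,
      Set.BijOn (gzFlowV m i hm z) (Vn n) (Vn n)) := by
  constructor
  · intro m i m' i' _ _ hm _ _ hm' z w p
    rcases le_total m m' with hmm' | hmm'
    · exact GZ.gz_comm_le m i m' i' hmm' hm hm' z w p
    · exact (GZ.gz_comm_le m' i' m i hmm' hm' hm w z p).symm
  · intro m i _ _ hm z
    exact GZ.gz_bijOn m i hm z
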